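/- Let A be a subalgebra of a finite-dimensional k-algebra B such that J_A = J_B. Let T = B ⊗_A − : mod(A) → mod(B) be induction and F : mod(B) → mod(A) restriction. Then for every B-module X, there is an isomorphism of B-modules T(F X) = B ⊗_A X ≅ X ⊕ S, where S is a semisimple B-module. -/

import Mathlib

noncomputable section

/-- The Jacobson radical of a ring, as a set. -/
def jacobsonSet (R : Type) [Ring R] : Set R := ((⊥ : Ideal R).jacobson : Set R)

section Restriction

variable (k B : Type) [Field k] [Ring B] [Algebra k B] (S : Subalgebra k B)

/-- Restriction of a `B`-module structure to the subalgebra `S ⊆ B`. -/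
def restModule (N : Type) [AddCommGroup N] [Module B N] : Module ↥S N :=
  Module.compHom N (S.val.toRingHom : ↥S →+* B)

variable (X : Type) [AddCommGroup X] [Module ↥S X]

/-- `X⁻ = Hom_A(B, X)` for an `A = S`-module `X`, where `B` is regarded as an
`A`-module by restriction; it is a left `B`-module via `(b • φ) x = φ (x * b)`. -/
def HomMinus : Type := B →ₗ[↥S] X

instance : AddCommGroup (HomMinus k B S X) :=
  inferInstanceAs (AddCommGroup (B →ₗ[↥S] X))

/-- The underlying `S`-linear map of an element of `X⁻`. -/
def HomMinus.toLin (φ : HomMinus k B S X) : B →ₗ[↥S] X := φ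

instance : Module B (HomMinus k B S X) where
  smul b φ := (HomMinus.toLin k B S X φ).comp (LinearMap.mulRight ↥S b)
  one_smul φ := LinearMap.ext fun x => by
    show HomMinus.toLin k B S X φ (x * 1) = HomMinus.toLin k B S X φ x
    rw [mul_one]
  mul_smul a b φ := LinearMap.ext fun x => by
    show HomMinus.toLin k B S X φ (x * (a * b)) = HomMinus.toLin k B S X φ ((x * a) * b)
    rw [mul_assoc]
  smul_zero a := LinearMap.ext fun _ => rfl
  smul_add a φ ψ := LinearMap.ext fun _ => rfl
  add_smul a b φ := LinearMap.ext fun x => by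
    show HomMinus.toLin k B S X φ (x * (a + b)) =
      HomMinus.toLin k B S X φ (x * a) + HomMinus.toLin k B S X φ (x * b)
    rw [mul_add, map_add]
  zero_smul φ := LinearMap.ext fun x => by
    show HomMinus.toLin k B S X φ (x * 0) = 0
    rw [mul_zero, map_zero]

lemma apply_coe_eq_smul_apply_one (φ : B →ₗ[↥S] X) (a : ↥S) :
    φ (a : B) = a • φ 1 := by
  have h : a • (1 : B) = (a : B) := by
    show (a : B) * 1 = (a : B)
    exact mul_one _
  rw [← h, map_smul]

/-- The evaluation map `ε_X : X⁻ → X`, `φ ↦ φ 1`, an `A = S`-module homomorphism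
(where `X⁻` is an `A`-module by restriction of its `B`-module structure). -/
def epsLin :
    letI := restModule k B S (HomMinus k B S X)
    HomMinus k B S X →ₗ[↥S] X :=
  letI := restModule k B S (HomMinus k B S X)
  { toFun := fun φ => HomMinus.toLin k B S X φ 1
    map_add' := fun _ _ => rfl
    map_smul' := by
      intro a φ
      show HomMinus.toLin k B S X φ ((1 : B) * (a : B)) =
        a • HomMinus.toLin k B S X φ 1
      rw [one_mul]
      exact apply_coe_eq_smul_apply_one k B S X (HomMinus.toLin k B S X φ) a }

variable (Y : Type) [AddCommGroup Y] [Module B Y]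

/-- The map `Hom_B(Y, X⁻) → Hom_A(Y, X)` sending `f` to the composite of `f`
followed by `ε_X`. -/
def transferMap (f : Y →ₗ[B] HomMinus k B S X) :
    letI := restModule k B S Y
    Y →ₗ[↥S] X :=
  letI := restModule k B S Y
  { toFun := fun y => HomMinus.toLin k B S X (f y) 1
    map_add' := fun y z => by
      show HomMinus.toLin k B S X (f (y + z)) 1 = _
      rw [map_add]
      rfl
    map_smul' := by
      intro a y
      show HomMinus.toLin k B S X (f ((a : B) • y)) 1 =
        a • HomMinus.toLin k B S X (f y) 1
      rw [map_smul]
      show HomMinus.toLin k B S X (f y) ((1 : B) * (a : B)) =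
        a • HomMinus.toLin k B S X (f y) 1
      rw [one_mul]
      exact apply_coe_eq_smul_apply_one k B S X (HomMinus.toLin k B S X (f y)) a }

end Restriction

end

theorem jacAux_mul_mem {B : Type*} [Ring B] {x : B} (hx : x ∈ Ideal.jacobson (⊥ : Ideal B))
    (y : B) : x * y ∈ Ideal.jacobson (⊥ : Ideal B) :=
  by rw [Ideal.jacobson_bot] at hx ⊢; exact Ideal.mul_mem_right y _ hx

theorem jacAux_exists_finset (B : Type*) [Ring B] [IsArtinian B B] :
    ∃ s : Finset (Ideal B), (∀ m ∈ s, m.IsMaximal) ∧ s.inf id = Ideal.jacobson ⊥ := by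
  classical
  let 𝒮 : Set (Ideal B) := {I | ∃ s : Finset (Ideal B), (∀ m ∈ s, m.IsMaximal) ∧ I = s.inf id}
  obtain ⟨E, ⟨s, hs, rfl⟩, hmin⟩ :=
    IsArtinian.set_has_minimal 𝒮 ⟨⊤, ∅, by simp, by simp⟩
  refine ⟨s, hs, le_antisymm ?_ (Finset.le_inf fun m hm => sInf_le ⟨bot_le, hs m hm⟩)⟩
  refine le_sInf fun I hI => ?_
  have hmem : (insert I s).inf id ∈ 𝒮 :=
    ⟨insert I s, fun m hm => (Finset.mem_insert.mp hm).elim (fun h => h ▸ hI.2) (hs m), rfl⟩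
  have hle : (insert I s).inf id ≤ s.inf id := Finset.inf_mono (Finset.subset_insert _ _)
  have heq : (insert I s).inf id = s.inf id := le_antisymm hle (by
    by_contra hne
    exact hmin _ hmem (lt_of_le_of_ne hle (by simpa using hne)))
  calc s.inf id = (insert I s).inf id := heq.symm
    _ ≤ I := Finset.inf_le (Finset.mem_insert_self _ _)

theorem jacAux_quot_semisimple (B : Type) [Ring B] [IsArtinian B B] :
    IsSemisimpleModule B (B ⧸ Ideal.jacobson (⊥ : Ideal B)) := by
  classical
  obtain ⟨s, hmax, hinf⟩ := jacAux_exists_finset B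
  have hJm : ∀ m ∈ s, Ideal.jacobson (⊥ : Ideal B) ≤ m := fun m hm => by
    rw [← hinf]; exact Finset.inf_le hm
  -- the product module
  letI P := ∀ m : s, B ⧸ (m : Ideal B)
  haveI hP : IsSemisimpleModule B P := by
    refine isSemisimpleModule_of_isSemisimpleModule_submodule'
      (p := fun i : s => LinearMap.range (LinearMap.single B (fun m : s => B ⧸ (m : Ideal B)) i))
      (fun i => ?_) ?_
    · haveI : IsSimpleModule B (B ⧸ (i : Ideal B)) :=
        isSimpleModule_iff_isCoatom.mpr ((Ideal.isMaximal_def).mp (hmax i i.2))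
      haveI : IsSemisimpleModule B (B ⧸ (i : Ideal B)) := inferInstance
      exact IsSemisimpleModule.congr
        (LinearEquiv.ofInjective _ (LinearMap.ker_eq_bot.mp (LinearMap.ker_single B (fun m : s => B ⧸ (m : Ideal B)) i))).symm
    · rw [eq_top_iff]
      intro x _
      have hx : x = ∑ i : s, Pi.single i (x i) := (Finset.univ_sum_single x).symm
      rw [hx]
      exact Submodule.sum_mem _ fun i _ =>
        Submodule.mem_iSup_of_mem i ⟨x i, rfl⟩
  -- the embedding
  have hker : Ideal.jacobson (⊥ : Ideal B) ≤
      LinearMap.ker (LinearMap.pi fun m : s => Submodule.mkQ (m : Ideal B)) := by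
    intro b hb
    rw [LinearMap.mem_ker]
    funext m
    show Submodule.mkQ (m : Ideal B) b = 0
    rw [Submodule.mkQ_apply, Submodule.Quotient.mk_eq_zero]
    exact hJm m m.2 hb
  set Φ : (B ⧸ Ideal.jacobson (⊥ : Ideal B)) →ₗ[B] P :=
    Submodule.liftQ _ (LinearMap.pi fun m : s => Submodule.mkQ (m : Ideal B)) hker with hΦ
  have hinj : Function.Injective Φ := by
    rw [← LinearMap.ker_eq_bot, hΦ, Submodule.ker_liftQ_eq_bot _ _ _ ?_]
    intro b hb
    rw [LinearMap.mem_ker] at hb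
    rw [← hinf, Submodule.mem_finsetInf]
    intro m hm
    have h2 := congrFun hb (⟨m, hm⟩ : s)
    rw [LinearMap.pi_apply] at h2
    show b ∈ m
    rw [← Submodule.Quotient.mk_eq_zero m]
    exact h2
  haveI : IsSemisimpleModule B (LinearMap.range Φ) := inferInstance
  exact IsSemisimpleModule.congr (M := ↥(LinearMap.range Φ)) (LinearEquiv.ofInjective Φ hinj)

theorem jacAux_semisimple_of_smul_zero (B M : Type) [Ring B] [IsArtinian B B]
    [AddCommGroup M] [Module B M]
    (h : ∀ j ∈ Ideal.jacobson (⊥ : Ideal B), ∀ m : M, j • m = 0) :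
    IsSemisimpleModule B M := by
  haveI := jacAux_quot_semisimple B
  refine isSemisimpleModule_of_isSemisimpleModule_submodule'
    (p := fun x : M => Submodule.span B {x}) (fun x => ?_) ?_
  · have hle : Ideal.jacobson (⊥ : Ideal B) ≤
        LinearMap.ker (LinearMap.toSpanSingleton B M x) := fun j hj => by
      rw [LinearMap.mem_ker, LinearMap.toSpanSingleton_apply]
      exact h j hj x
    set ψ := Submodule.liftQ _ (LinearMap.toSpanSingleton B M x) hle with hψ
    have hr : LinearMap.range ψ = Submodule.span B {x} := by
      rw [hψ, Submodule.range_liftQ, ← LinearMap.span_singleton_eq_range]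
    haveI : IsSemisimpleModule B (LinearMap.range ψ) :=
      IsSemisimpleModule.range ψ
    exact IsSemisimpleModule.congr (M := ↥(LinearMap.range ψ)) (LinearEquiv.ofEq _ _ hr.symm)
  · rw [eq_top_iff]
    exact fun x _ => Submodule.mem_iSup_of_mem x (Submodule.mem_span_singleton_self x)

/-- Let `A = S` be a subalgebra of the finite-dimensional `k`-algebra
`B` such that `J_A = J_B`, and let `X` be a `B`-module.  Then the induced module
`T(FX) = B ⊗_A X` (encoded here by its universal property: `T` is a `B`-module with an
`A`-linear map `ι : X → T` through which every `A`-linear map from `X` to a `B`-module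
factors uniquely `B`-linearly) is isomorphic as a `B`-module to `X ⊕ S'` for some
semisimple `B`-module `S'`. -/
theorem induction_of_restriction_iso_self_prod_semisimple
    (k B : Type) [Field k] [Ring B] [Algebra k B] [FiniteDimensional k B]
    (S : Subalgebra k B)
    (hJ : Subtype.val '' jacobsonSet ↥S = jacobsonSet B)
    (X : Type) [AddCommGroup X] [Module B X] [Module.Finite B X]
    (T : Type) [AddCommGroup T] [Module B T]
    (ι : letI := restModule k B S X
         letI := restModule k B S T
         X →ₗ[↥S] T)
    (huniv : ∀ (Z : Type) (_ : AddCommGroup Z) (_ : Module B Z),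
       letI := restModule k B S X
       letI := restModule k B S Z
       ∀ g : X →ₗ[↥S] Z, ∃! h : T →ₗ[B] Z, ∀ x : X, h (ι x) = g x) :
    ∃ (S' : Type) (_ : AddCommGroup S') (_ : Module B S'),
      IsSemisimpleModule B S' ∧ Nonempty (T ≃ₗ[B] X × S') := by
  classical
  haveI hart : IsArtinian B B := isArtinian_of_tower k inferInstance
  -- the counit e : T →ₗ[B] X
  obtain ⟨e, he, -⟩ := huniv X inferInstance inferInstance LinearMap.id
  have he' : ∀ x : X, e (ι x) = x := he
  -- range ι spans T
  have hspan : Submodule.span B (Set.range ι) = ⊤ := by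
    set T' := Submodule.span B (Set.range ι) with hT'
    obtain ⟨h, -, hu⟩ := huniv (T ⧸ T') inferInstance inferInstance 0
    have h1 : T'.mkQ = h := hu T'.mkQ (fun x => by
      show T'.mkQ (ι x) = 0
      rw [Submodule.mkQ_apply, Submodule.Quotient.mk_eq_zero]
      exact Submodule.subset_span (Set.mem_range_self x))
    have h2 : (0 : T →ₗ[B] T ⧸ T') = h := hu 0 (fun x => rfl)
    rw [eq_top_iff]
    intro t _
    rw [← Submodule.Quotient.mk_eq_zero, ← Submodule.mkQ_apply, h1.trans h2.symm]
    rfl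
  have hsm : ∀ (a : ↥S) (x : X), ι ((a : B) • x) = (a : B) • ι x := fun a x =>
    map_smul ι a x
  -- J • T lands in the range of ι
  have hkey : ∀ t : T, ∀ j ∈ Ideal.jacobson (⊥ : Ideal B), ∃ x : X, ι x = j • t := by
    intro t
    have ht : t ∈ Submodule.span B (Set.range ι) := hspan ▸ Submodule.mem_top
    refine Submodule.span_induction
      (p := fun t _ => ∀ j ∈ Ideal.jacobson (⊥ : Ideal B), ∃ x : X, ι x = j • t)
      ?_ ?_ ?_ ?_ ht
    · rintro _ ⟨x₀, rfl⟩ j hj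
      have hj' : j ∈ jacobsonSet B := hj
      rw [← hJ] at hj'
      obtain ⟨a, -, rfl⟩ := hj'
      exact ⟨(a : B) • x₀, hsm a x₀⟩
    · exact fun j hj => ⟨0, by rw [map_zero, smul_zero]⟩
    · rintro u v hu hv ihu ihv j hj
      obtain ⟨x, hx⟩ := ihu j hj
      obtain ⟨y, hy⟩ := ihv j hj
      exact ⟨x + y, by rw [map_add, hx, hy, smul_add]⟩
    · rintro b u hu ihu j hj
      obtain ⟨x, hx⟩ := ihu (j * b) (jacAux_mul_mem hj b)
      exact ⟨x, by rw [hx, mul_smul]⟩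
  set K : Submodule B T := LinearMap.ker e with hK
  set N : Submodule B T := Ideal.jacobson (⊥ : Ideal B) • (⊤ : Submodule B T) with hN
  -- N is contained in the range of ι
  have hNr : ∀ t ∈ N, ∃ x : X, ι x = t := by
    intro t ht
    refine Submodule.smul_induction_on ht (fun j hj n _ => hkey n j hj) ?_
    rintro u v ⟨x, hx⟩ ⟨y, hy⟩
    exact ⟨x + y, by rw [map_add, hx, hy]⟩
  -- K ∩ N = ⊥
  have hKN : K ⊓ N = ⊥ := by
    rw [eq_bot_iff]
    rintro t ⟨htK, htN⟩
    obtain ⟨x, hx⟩ := hNr t htN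
    have hx0 : x = 0 := by
      have h1 : e t = 0 := htK
      rw [← hx, he'] at h1
      exact h1
    rw [hx0, map_zero] at hx
    exact hx ▸ Submodule.mem_bot B |>.mpr rfl
  -- T ⧸ N is killed by the radical
  have hquot : ∀ j ∈ Ideal.jacobson (⊥ : Ideal B), ∀ m : T ⧸ N, j • m = 0 := by
    intro j hj m
    obtain ⟨t, rfl⟩ := N.mkQ_surjective m
    rw [Submodule.mkQ_apply, ← Submodule.Quotient.mk_smul, Submodule.Quotient.mk_eq_zero]
    exact Submodule.smul_mem_smul hj Submodule.mem_top
  haveI hssQ : IsSemisimpleModule B (T ⧸ N) := jacAux_semisimple_of_smul_zero B _ hquot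
  -- find a complement C of K
  obtain ⟨C', hC'⟩ := exists_isCompl (Submodule.map N.mkQ K)
  set C : Submodule B T := Submodule.comap N.mkQ C' with hC
  have hNC : N ≤ C := by
    intro n hn
    show N.mkQ n ∈ C'
    have h0 : (Submodule.Quotient.mk n : T ⧸ N) = 0 := (Submodule.Quotient.mk_eq_zero N).mpr hn
    rw [Submodule.mkQ_apply, h0]
    exact C'.zero_mem
  have hcompl : IsCompl K C := by
    constructor
    · rw [disjoint_iff, eq_bot_iff]
      rintro t ⟨htK, htC⟩
      have h1 : N.mkQ t ∈ Submodule.map N.mkQ K ⊓ C' := ⟨⟨t, htK, rfl⟩, htC⟩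
      rw [hC'.inf_eq_bot, Submodule.mem_bot] at h1
      rw [Submodule.mkQ_apply, Submodule.Quotient.mk_eq_zero] at h1
      have : t ∈ K ⊓ N := ⟨htK, h1⟩
      rw [hKN] at this
      exact this
    · rw [codisjoint_iff, eq_top_iff]
      intro t _
      have h1 : N.mkQ t ∈ Submodule.map N.mkQ K ⊔ C' := by
        rw [hC'.sup_eq_top]; trivial
      obtain ⟨u', hu', c', hc', huc⟩ := Submodule.mem_sup.mp h1
      obtain ⟨u, huK, rfl⟩ := hu'
      obtain ⟨v, rfl⟩ := N.mkQ_surjective c'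
      have hvC : v ∈ C := hc'
      have hdiff : t - u - v ∈ N := by
        rw [← Submodule.Quotient.mk_eq_zero N]
        have : N.mkQ (t - u - v) = 0 := by
          rw [map_sub, map_sub, ← huc]
          abel
        rwa [Submodule.mkQ_apply] at this
      have : t = u + (v + (t - u - v)) := by abel
      rw [this]
      exact Submodule.add_mem_sup huK (C.add_mem hvC (hNC hdiff))
  -- e restricted to C is bijective
  set f : ↥C →ₗ[B] X := e.comp C.subtype with hf
  have hfinj : Function.Injective f := by
    rw [← LinearMap.ker_eq_bot, eq_bot_iff]
    rintro ⟨c, hcC⟩ hc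
    have hcK : c ∈ K := hc
    have : c ∈ K ⊓ C := ⟨hcK, hcC⟩
    rw [hcompl.inf_eq_bot, Submodule.mem_bot] at this
    exact Submodule.mem_bot B |>.mpr (Subtype.ext this)
  have hfsurj : Function.Surjective f := by
    intro x
    have h1 : ι x ∈ K ⊔ C := by rw [hcompl.sup_eq_top]; trivial
    obtain ⟨u, huK, c, hcC, huc⟩ := Submodule.mem_sup.mp h1
    refine ⟨⟨c, hcC⟩, ?_⟩
    have h2 : e (ι x) = e u + e c := by rw [← huc, map_add]
    have h3 : e u = 0 := huK
    rw [he', h3, zero_add] at h2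
    exact h2.symm
  -- K is semisimple
  have hKss : IsSemisimpleModule B ↥K := by
    refine jacAux_semisimple_of_smul_zero B ↥K ?_
    rintro j hj ⟨t, htK⟩
    refine Subtype.ext ?_
    show j • t = 0
    have h1 : j • t ∈ K ⊓ N := ⟨K.smul_mem j htK, Submodule.smul_mem_smul hj Submodule.mem_top⟩
    rw [hKN, Submodule.mem_bot] at h1
    exact h1
  refine ⟨↥K, inferInstance, inferInstance, hKss, ⟨?_⟩⟩
  exact (Submodule.prodEquivOfIsCompl K C hcompl).symm.trans
    ((LinearEquiv.prodComm B ↥K ↥C).trans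
      ((LinearEquiv.ofBijective f ⟨hfinj, hfsurj⟩).prodCongr (LinearEquiv.refl B ↥K)))
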